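/- Let A be an associative unital algebra and for a ∈ A let S_a = u⊗u⊗a + u⊗a⊗u + a⊗u⊗u ∈ A⊗A⊗A, where u is the unit. Then for all a, b, c ∈ A: a⊗b⊗c + b⊗c⊗a + c⊗a⊗b + a⊗c⊗b + c⊗b⊗a + b⊗a⊗c = S_a S_b S_c − S_{ab} S_c − S_{ac} S_b − S_{bc} S_a + S_{acb} + S_{bca}. -/

import Mathlib

open TensorProduct

/-- In `A ⊗ A ⊗ A` with componentwise multiplication, with
`S a = 1⊗1⊗a + 1⊗a⊗1 + a⊗1⊗1`, for all `a b c : A` the symmetrization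
`Σ_{σ ∈ S₃} a_{σ(1)} ⊗ a_{σ(2)} ⊗ a_{σ(3)}` equals
`S a * S b * S c - S (a*b) * S c - S (a*c) * S b - S (b*c) * S a + S (a*c*b) + S (b*c*a)`. -/
theorem symmetrized_tensor_from_S_elements
    (A : Type*) [Ring A] [Algebra ℝ A]
    (S : A → A ⊗[ℝ] (A ⊗[ℝ] A))
    (hS : ∀ a : A, S a = (1 : A) ⊗ₜ[ℝ] ((1 : A) ⊗ₜ[ℝ] a)
      + (1 : A) ⊗ₜ[ℝ] (a ⊗ₜ[ℝ] (1 : A)) + a ⊗ₜ[ℝ] ((1 : A) ⊗ₜ[ℝ] (1 : A))) :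
    ∀ a b c : A,
      a ⊗ₜ[ℝ] (b ⊗ₜ[ℝ] c) + b ⊗ₜ[ℝ] (c ⊗ₜ[ℝ] a) + c ⊗ₜ[ℝ] (a ⊗ₜ[ℝ] b)
        + a ⊗ₜ[ℝ] (c ⊗ₜ[ℝ] b) + c ⊗ₜ[ℝ] (b ⊗ₜ[ℝ] a) + b ⊗ₜ[ℝ] (a ⊗ₜ[ℝ] c)
      = S a * S b * S c - S (a * b) * S c - S (a * c) * S b - S (b * c) * S a
        + S (a * c * b) + S (b * c * a) := by
  intro a b c
  simp only [hS, add_mul, mul_add, Algebra.TensorProduct.tmul_mul_tmul, one_mul, mul_one]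
  abel
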